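/- Let T be a tree of order n with diameter at least 4, with l(T) leaves, let u be a fixed leaf, and let T'_u be the tree obtained from T by deleting all leaves except u. Then β(T̊) + l(T) − 1 ≤ Sd_s(T, T^c) ≤ β(T'_u) + l(T) − 1, where T̊ is the subgraph induced by the interior (non-leaf) vertices of T and β denotes vertex cover number. -/

import Mathlib

open SimpleGraph

variable {V : Type*}

/-- `w` strongly resolves `u` and `v` in `G`. -/
def StronglyResolves (G : SimpleGraph V) (w u v : V) : Prop :=
  G.dist u w = G.dist u v + G.dist v w ∨ G.dist v w = G.dist v u + G.dist u w

/-- `S` is a strong metric generator for `G`. -/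
def IsStrongMetricGen (G : SimpleGraph V) (S : Set V) : Prop :=
  ∀ u v : V, u ≠ v → ∃ w ∈ S, StronglyResolves G w u v

/-- The simultaneous strong metric dimension of a family of graphs. -/
noncomputable def SdS (𝒢 : Set (SimpleGraph V)) : ℕ :=
  sInf {n | ∃ S : Set V, S.ncard = n ∧ ∀ G ∈ 𝒢, IsStrongMetricGen G S}

/-- The strong metric dimension of a single graph. -/
noncomputable def sdim (G : SimpleGraph V) : ℕ := SdS {G}

/-- `u` is maximally distant from `v` in `G`. -/
def MaxDistantFrom (G : SimpleGraph V) (u v : V) : Prop :=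
  ∀ w : V, G.Adj u w → G.dist v w ≤ G.dist v u

/-- `u` and `v` are mutually maximally distant in `G`. -/
def MutuallyMaxDistant (G : SimpleGraph V) (u v : V) : Prop :=
  MaxDistantFrom G u v ∧ MaxDistantFrom G v u

/-- The strong resolving graph of `G`. -/
def SRG (G : SimpleGraph V) : SimpleGraph V where
  Adj u v := u ≠ v ∧ MutuallyMaxDistant G u v
  symm := by
    constructor; intro u v h
    exact ⟨h.1.symm, h.2.2, h.2.1⟩
  loopless := by constructor; intro u h; exact h.1 rfl

/-- The boundary of `G`: vertices mutually maximally distant from some vertex. -/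
def Boundary (G : SimpleGraph V) : Set V :=
  {u | ∃ v, MutuallyMaxDistant G u v}

/-- `S` is a vertex cover of `G`. -/
def IsVertexCover (G : SimpleGraph V) (S : Set V) : Prop :=
  ∀ u v : V, G.Adj u v → u ∈ S ∨ v ∈ S

/-- The vertex cover number. -/
noncomputable def vcNum (G : SimpleGraph V) : ℕ :=
  sInf {n | ∃ S : Set V, S.ncard = n ∧ _root_.IsVertexCover G S}

/-- A strong resolving cover: simultaneously a vertex cover and a strong metric generator. -/
def IsStrongResCover (G : SimpleGraph V) (S : Set V) : Prop :=
  _root_.IsVertexCover G S ∧ IsStrongMetricGen G S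

/-- The strong resolving cover number `β_s`. -/
noncomputable def betaS (G : SimpleGraph V) : ℕ :=
  sInf {n | ∃ S : Set V, S.ncard = n ∧ IsStrongResCover G S}

/-- `G` is 2-antipodal. -/
def TwoAntipodal (G : SimpleGraph V) : Prop :=
  ∀ x : V, ∃! y : V, G.dist x y = G.diam

/-- `v` is a leaf of `G` (degree one). -/
def IsLeaf (G : SimpleGraph V) (v : V) : Prop := ∃! w : V, G.Adj v w
section MyAux
variable {T : SimpleGraph V}
variable {T : SimpleGraph V}

lemma sr_symm {G : SimpleGraph V} {w x y : V} (h : StronglyResolves G w x y) :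
    StronglyResolves G w y x := h.symm

lemma univ_gen (G : SimpleGraph V) : IsStrongMetricGen G Set.univ := by
  intro u v _
  exact ⟨v, Set.mem_univ v, Or.inl (by simp)⟩

lemma resolve_left {G : SimpleGraph V} {S : Set V} {a : V} (b : V) (h : a ∈ S) :
    ∃ w ∈ S, StronglyResolves G w a b :=
  ⟨a, h, Or.inr (by simp)⟩

lemma resolve_right {G : SimpleGraph V} {S : Set V} (a : V) {b : V} (h : b ∈ S) :
    ∃ w ∈ S, StronglyResolves G w a b :=
  ⟨b, h, Or.inl (by simp)⟩

lemma dist_eq_length (hT : T.IsTree) {a b : V} {p : T.Walk a b} (hp : p.IsPath) :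
    T.dist a b = p.length := by
  obtain ⟨q, hq, hql⟩ := hT.isConnected.exists_path_of_dist a b
  rw [← hql]
  have : q = p := (hT.existsUnique_path a b).unique hq hp
  rw [this]

lemma leaf_dist (hT : T.IsTree) {y n z : V} (hy : IsLeaf T y) (hn : T.Adj y n) (hz : z ≠ y) :
    T.dist y z = T.dist n z + 1 := by
  have hpos : 0 < T.dist y z := hT.isConnected.pos_dist_of_ne (Ne.symm hz)
  obtain ⟨p, hplen⟩ := hT.isConnected.exists_walk_length_eq_dist y z
  have htri : T.dist y z ≤ T.dist y n + T.dist n z := hT.isConnected.dist_triangle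
  have h1 : T.dist y n = 1 := dist_eq_one_iff_adj.mpr hn
  cases p with
  | nil => exact absurd rfl hz
  | cons h q =>
      rename_i c
      have hc : c = n := hy.unique h hn
      have hle : T.dist n z ≤ q.length := hc ▸ T.dist_le q
      simp only [Walk.length_cons] at hplen
      omega

lemma leaf_not_adj_leaf (hT : T.IsTree) (hw : ∃ x y, 4 ≤ T.dist x y)
    {a b : V} (ha : IsLeaf T a) (hb : IsLeaf T b) (hadj : T.Adj a b) : False := by
  have hall : ∀ z : V, z = a ∨ z = b := by
    intro z
    by_contra h
    push_neg at h
    have h1 : T.dist a z = T.dist b z + 1 := leaf_dist hT ha hadj h.1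
    have h2 : T.dist b z = T.dist a z + 1 := leaf_dist hT hb hadj.symm h.2
    omega
  obtain ⟨x, y, hxy⟩ := hw
  have hab : T.dist a b = 1 := dist_eq_one_iff_adj.mpr hadj
  have hba : T.dist b a = 1 := dist_eq_one_iff_adj.mpr hadj.symm
  rcases hall x with rfl | rfl <;> rcases hall y with rfl | rfl <;>
    simp_all [SimpleGraph.dist_self]

lemma interior_two_nbrs (hT : T.IsTree) (hnt : Nontrivial V) {v : V} (hv : ¬ IsLeaf T v) :
    ∃ x y : V, x ≠ y ∧ T.Adj v x ∧ T.Adj v y := by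
  obtain ⟨w, hwv⟩ := exists_ne v
  have hpos : 0 < T.dist v w := hT.isConnected.pos_dist_of_ne (Ne.symm hwv)
  obtain ⟨p, hplen⟩ := hT.isConnected.exists_walk_length_eq_dist v w
  have hx : ∃ x, T.Adj v x := by
    cases p with
    | nil => exact absurd rfl hwv
    | cons h q => exact ⟨_, h⟩
  obtain ⟨x, hx⟩ := hx
  have : ¬ ∀ y, T.Adj v y → y = x := fun hall => hv ⟨x, hx, hall⟩
  push_neg at this
  obtain ⟨y, hy, hyx⟩ := this
  exact ⟨y, x, hyx, hy, hx⟩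

lemma exists_nbr_dist_succ (hT : T.IsTree) (a : V) {v x₁ x₂ : V} (h12 : x₁ ≠ x₂)
    (h1 : T.Adj v x₁) (h2 : T.Adj v x₂) :
    ∃ x, T.Adj v x ∧ T.dist a x = T.dist a v + 1 := by
  classical
  obtain ⟨p, hp, hplen⟩ := hT.isConnected.exists_path_of_dist a v
  have hout : ∀ x, T.Adj v x → x ∉ p.support → T.dist a x = T.dist a v + 1 := by
    intro x hx hxs
    have hrev : (Walk.cons hx.symm p.reverse).IsPath :=
      hp.reverse.cons (by simpa using hxs)
    have hq : ((Walk.cons hx.symm p.reverse).reverse : T.Walk a x).IsPath := hrev.reverse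
    have := dist_eq_length hT hq
    simpa [Walk.length_reverse, hplen] using this
  have hpen : ∀ x, T.Adj v x → x ∈ p.support → x = p.getVert (p.length - 1) := by
    intro x hx hxs
    have hdrop : (p.dropUntil x hxs).IsPath := hp.dropUntil hxs
    have hsingle : (Walk.cons hx.symm Walk.nil : T.Walk x v).IsPath := by
      simp [Walk.isPath_def, hx.ne']
    have heq : p.dropUntil x hxs = Walk.cons hx.symm Walk.nil :=
      (hT.existsUnique_path x v).unique hdrop hsingle
    have hlen : (p.takeUntil x hxs).length + (p.dropUntil x hxs).length = p.length := by
      rw [← Walk.length_append, p.take_spec hxs]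
    have hlen1 : (p.dropUntil x hxs).length = 1 := by rw [heq]; simp
    have hT1 : (p.takeUntil x hxs).length = p.length - 1 := by omega
    have hgv : p.getVert (p.length - 1) = x := by
      conv_lhs => rw [← p.take_spec hxs]
      rw [Walk.getVert_append]
      simp [hT1]
    exact hgv.symm
  by_cases hs1 : x₁ ∈ p.support
  · by_cases hs2 : x₂ ∈ p.support
    · exact absurd ((hpen x₁ h1 hs1).trans (hpen x₂ h2 hs2).symm) h12
    · exact ⟨x₂, h2, hout x₂ h2 hs2⟩
  · exact ⟨x₁, h1, hout x₁ h1 hs1⟩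

lemma unique_common_nbr (hT : T.IsTree) {a b x₁ x₂ : V} (hab : a ≠ b)
    (h1 : T.Adj b x₁) (h2 : T.Adj b x₂) (g1 : T.Adj x₁ a) (g2 : T.Adj x₂ a) : x₁ = x₂ := by
  have p1 : (Walk.cons g1.symm (Walk.cons h1.symm Walk.nil) : T.Walk a b).IsPath := by
    simp [Walk.isPath_def, g1.ne', h1.ne', hab]
  have p2 : (Walk.cons g2.symm (Walk.cons h2.symm Walk.nil) : T.Walk a b).IsPath := by
    simp [Walk.isPath_def, g2.ne', h2.ne', hab]
  have heq := (hT.existsUnique_path a b).unique p1 p2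
  have := congrArg Walk.support heq
  simpa using this

lemma exists_far (hw : ∃ x y, 4 ≤ T.dist x y) (hT : T.IsTree) {a b : V} (hadj : T.Adj a b) :
    ∃ z, z ≠ a ∧ z ≠ b ∧ ¬ T.Adj a z ∧ ¬ T.Adj b z := by
  by_contra h
  push_neg at h
  have hclose : ∀ z : V, T.dist z a ≤ 1 ∨ T.dist z b ≤ 1 := by
    intro z
    rcases eq_or_ne z a with rfl | hza
    · left; rw [SimpleGraph.dist_self]; omega
    rcases eq_or_ne z b with rfl | hzb
    · right; rw [SimpleGraph.dist_self]; omega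
    rcases Classical.em (T.Adj a z) with ha | ha
    · left; exact le_of_eq (dist_eq_one_iff_adj.mpr ha.symm)
    · right; exact le_of_eq (dist_eq_one_iff_adj.mpr ((h z hza hzb ha)).symm)
  obtain ⟨x, y, hxy⟩ := hw
  have hab : T.dist a b = 1 := dist_eq_one_iff_adj.mpr hadj
  have hba : T.dist b a = 1 := dist_eq_one_iff_adj.mpr hadj.symm
  have t1 : T.dist x y ≤ T.dist x a + T.dist a y := hT.isConnected.dist_triangle
  have t2 : T.dist x y ≤ T.dist x b + T.dist b y := hT.isConnected.dist_triangle
  have t3 : T.dist a y ≤ T.dist a b + T.dist b y := hT.isConnected.dist_triangle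
  have t4 : T.dist b y ≤ T.dist b a + T.dist a y := hT.isConnected.dist_triangle
  have cx := hclose x
  have cy := hclose y
  have e3 : T.dist y a = T.dist a y := SimpleGraph.dist_comm ..
  have e4 : T.dist y b = T.dist b y := SimpleGraph.dist_comm ..
  omega

lemma compl_dist_two (hT : T.IsTree) (hw : ∃ x y, 4 ≤ T.dist x y)
    {a b : V} (hadj : T.Adj a b) : Tᶜ.dist a b = 2 := by
  obtain ⟨z, hza, hzb, h1, h2⟩ := exists_far hw hT hadj
  have c1 : Tᶜ.Adj a z := by rw [compl_adj]; exact ⟨Ne.symm hza, fun h => h1 h⟩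
  have c2 : Tᶜ.Adj z b := by rw [compl_adj]; exact ⟨hzb, fun h => h2 h.symm⟩
  have hwalk : (Walk.cons c1 (Walk.cons c2 Walk.nil) : Tᶜ.Walk a b).length = 2 := by simp
  have hle : Tᶜ.dist a b ≤ 2 := by
    have := Tᶜ.dist_le (Walk.cons c1 (Walk.cons c2 Walk.nil))
    omega
  have hne0 : Tᶜ.dist a b ≠ 0 := by
    rw [dist_ne_zero_iff_ne_and_reachable]
    exact ⟨hadj.ne, (Walk.cons c1 (Walk.cons c2 Walk.nil)).reachable⟩
  have hne1 : Tᶜ.dist a b ≠ 1 := by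
    intro h
    exact (dist_eq_one_iff_adj.mp h).2 hadj
  omega

lemma compl_reachable (hT : T.IsTree) (hw : ∃ x y, 4 ≤ T.dist x y) (a b : V) :
    Tᶜ.Reachable a b := by
  rcases eq_or_ne a b with rfl | hab
  · exact Reachable.refl a
  rcases Classical.em (T.Adj a b) with h | h
  · obtain ⟨z, hza, hzb, h1, h2⟩ := exists_far hw hT h
    have c1 : Tᶜ.Adj a z := by rw [compl_adj]; exact ⟨Ne.symm hza, fun h => h1 h⟩
    have c2 : Tᶜ.Adj z b := by rw [compl_adj]; exact ⟨hzb, fun h => h2 h.symm⟩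
    exact (Walk.cons c1 (Walk.cons c2 Walk.nil)).reachable
  · exact (Adj.reachable (by rw [compl_adj]; exact ⟨hab, h⟩))

lemma compl_dist_le_two (hT : T.IsTree) (hw : ∃ x y, 4 ≤ T.dist x y) (a b : V) :
    Tᶜ.dist a b ≤ 2 := by
  rcases eq_or_ne a b with rfl | hab
  · rw [SimpleGraph.dist_self]; omega
  rcases Classical.em (T.Adj a b) with h | h
  · exact le_of_eq (compl_dist_two hT hw h)
  · have : Tᶜ.Adj a b := by rw [compl_adj]; exact ⟨hab, h⟩
    have := dist_eq_one_iff_adj.mpr this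
    omega

lemma gen_compl_cover (hT : T.IsTree) (hw : ∃ x y, 4 ≤ T.dist x y)
    {S : Set V} (hS : IsStrongMetricGen Tᶜ S) : ∀ a b : V, T.Adj a b → a ∈ S ∨ b ∈ S := by
  intro a b hadj
  obtain ⟨w, hwS, hres⟩ := hS a b hadj.ne
  have h2 : Tᶜ.dist a b = 2 := compl_dist_two hT hw hadj
  have h2' : Tᶜ.dist b a = 2 := by rw [SimpleGraph.dist_comm]; exact h2
  rcases hres with h | h
  · have hle : Tᶜ.dist a w ≤ 2 := compl_dist_le_two hT hw a w
    have : Tᶜ.dist b w = 0 := by omega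
    have := ((compl_reachable hT hw b w).dist_eq_zero_iff).mp this
    right; rwa [← this] at hwS
  · have hle : Tᶜ.dist b w ≤ 2 := compl_dist_le_two hT hw b w
    have : Tᶜ.dist a w = 0 := by omega
    have := ((compl_reachable hT hw a w).dist_eq_zero_iff).mp this
    left; rwa [← this] at hwS

lemma gen_tree_leaves (hT : T.IsTree) {S : Set V} (hS : IsStrongMetricGen T S)
    {x y : V} (hx : IsLeaf T x) (hy : IsLeaf T y) (hxy : x ≠ y) : x ∈ S ∨ y ∈ S := by
  by_contra h
  push_neg at h
  obtain ⟨w, hwS, hres⟩ := hS x y hxy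
  have hwx : w ≠ x := fun e => h.1 (e ▸ hwS)
  have hwy : w ≠ y := fun e => h.2 (e ▸ hwS)
  obtain ⟨nx, hnx, -⟩ := id hx
  obtain ⟨ny, hny, -⟩ := id hy
  rcases hres with he | he
  · have e1 : T.dist y w = T.dist ny w + 1 := leaf_dist hT hy hny hwy
    have e2 : T.dist y x = T.dist ny x + 1 := leaf_dist hT hy hny hxy
    have e3 : T.dist x y = T.dist y x := SimpleGraph.dist_comm ..
    have e4 : T.dist x ny = T.dist ny x := SimpleGraph.dist_comm ..
    have t : T.dist x w ≤ T.dist x ny + T.dist ny w := hT.isConnected.dist_triangle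
    omega
  · have e1 : T.dist x w = T.dist nx w + 1 := leaf_dist hT hx hnx hwx
    have e2 : T.dist x y = T.dist nx y + 1 := leaf_dist hT hx hnx hxy.symm
    have e3 : T.dist y x = T.dist x y := SimpleGraph.dist_comm ..
    have e4 : T.dist y nx = T.dist nx y := SimpleGraph.dist_comm ..
    have t : T.dist y w ≤ T.dist y nx + T.dist nx w := hT.isConnected.dist_triangle
    omega

lemma res_tree (hT : T.IsTree) (hnt : Nontrivial V) {S : Set V}
    (hcov : ∀ x y : V, T.Adj x y → x ∈ S ∨ y ∈ S) {a b : V} (hab : a ≠ b)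
    (hbS : b ∉ S) (hbI : ¬ IsLeaf T b) :
    ∃ w ∈ S, T.dist a w = T.dist a b + T.dist b w := by
  obtain ⟨x₁, x₂, h12, h1, h2⟩ := interior_two_nbrs hT hnt hbI
  obtain ⟨x, hx, hdist⟩ := exists_nbr_dist_succ hT a h12 h1 h2
  have hxS : x ∈ S := (hcov b x hx).resolve_left hbS
  refine ⟨x, hxS, ?_⟩
  rw [hdist, dist_eq_one_iff_adj.mpr hx]

lemma res_compl (hT : T.IsTree) (hw : ∃ x y, 4 ≤ T.dist x y) (hnt : Nontrivial V) {S : Set V}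
    (hcov : ∀ x y : V, T.Adj x y → x ∈ S ∨ y ∈ S) {a b : V} (hab : a ≠ b)
    (hnadj : ¬ T.Adj a b) (hbS : b ∉ S) (hbI : ¬ IsLeaf T b) :
    ∃ w ∈ S, Tᶜ.dist b w = Tᶜ.dist b a + Tᶜ.dist a w := by
  obtain ⟨x₁, x₂, h12, h1, h2⟩ := interior_two_nbrs hT hnt hbI
  have hpick : ∃ x, T.Adj b x ∧ ¬ T.Adj x a := by
    by_cases hc : T.Adj x₁ a
    · exact ⟨x₂, h2, fun hc2 => h12 (unique_common_nbr hT hab h1 h2 hc hc2)⟩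
    · exact ⟨x₁, h1, hc⟩
  obtain ⟨x, hbx, hxa⟩ := hpick
  have hxS : x ∈ S := (hcov b x hbx).resolve_left hbS
  have hxna : x ≠ a := fun e => hnadj ((e ▸ hbx).symm)
  have d1 : Tᶜ.dist b a = 1 := dist_eq_one_iff_adj.mpr (by rw [compl_adj]; exact ⟨Ne.symm hab, fun h => hnadj h.symm⟩)
  have d2 : Tᶜ.dist a x = 1 := dist_eq_one_iff_adj.mpr (by rw [compl_adj]; exact ⟨Ne.symm hxna, fun h => hxa h.symm⟩)
  have d3 : Tᶜ.dist b x = 2 := compl_dist_two hT hw hbx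
  exact ⟨x, hxS, by rw [d1, d2, d3]⟩

end MyAux

theorem stmt19 [Fintype V] (T : SimpleGraph V) (hT : T.IsTree) (hd : 4 ≤ T.diam)
    (u : V) (hu : IsLeaf T u) :
    vcNum (T.induce {v : V | ¬ IsLeaf T v}) + {v : V | IsLeaf T v}.ncard - 1
        ≤ SdS {T, Tᶜ} ∧
    SdS {T, Tᶜ} ≤
      vcNum (T.induce ({v : V | ¬ IsLeaf T v} ∪ {u})) + {v : V | IsLeaf T v}.ncard - 1 := by
  classical
  set I : Set V := {v : V | ¬ IsLeaf T v} with hI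
  set L : Set V := {v : V | IsLeaf T v} with hL
  -- basic facts
  have hnt : Nontrivial V := T.nontrivial_of_diam_ne_zero (by omega)
  have hne : Nonempty V := hnt.to_nonempty
  have hetop : T.ediam ≠ ⊤ := by
    intro h
    rw [SimpleGraph.diam, h] at hd
    simp at hd
  have hwit : ∃ x y, 4 ≤ T.dist x y := by
    obtain ⟨x, y, hxy⟩ := T.exists_edist_eq_ediam_of_ne_top hetop
    refine ⟨x, y, ?_⟩
    have : T.dist x y = T.diam := by
      rw [SimpleGraph.dist, SimpleGraph.diam, hxy]
    omega
  have hLu : u ∈ L := hu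
  have hLpos : 1 ≤ L.ncard := by
    have : 0 < L.ncard := (Set.ncard_pos (Set.toFinite L)).mpr ⟨u, hLu⟩
    omega
  constructor
  · -- lower bound
    have hmem : SdS ({T, Tᶜ} : Set (SimpleGraph V)) ∈
        {n | ∃ S : Set V, S.ncard = n ∧ ∀ G ∈ ({T, Tᶜ} : Set (SimpleGraph V)), IsStrongMetricGen G S} :=
      Nat.sInf_mem ⟨Set.univ.ncard, Set.univ, rfl, fun G _ => univ_gen G⟩
    obtain ⟨S, hScard, hSgen⟩ := hmem
    have hgT : IsStrongMetricGen T S := hSgen T (by simp)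
    have hgC : IsStrongMetricGen Tᶜ S := hSgen Tᶜ (by simp)
    have hcov : ∀ x y : V, T.Adj x y → x ∈ S ∨ y ∈ S := gen_compl_cover hT hwit hgC
    -- vertex cover part
    have hvc : vcNum (T.induce I) ≤ (S ∩ I).ncard := by
      set S' : Set ↥I := Subtype.val ⁻¹' S with hS'
      have hcov' : _root_.IsVertexCover (T.induce I) S' := by
        intro x y hxy
        exact hcov x y hxy
      have h1 : vcNum (T.induce I) ≤ S'.ncard := Nat.sInf_le ⟨S', rfl, hcov'⟩
      have himg : Subtype.val '' S' = S ∩ I := by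
        ext z
        simp only [Set.mem_image, Set.mem_preimage, Set.mem_inter_iff, hS']
        constructor
        · rintro ⟨⟨w, hw⟩, hwS, rfl⟩; exact ⟨hwS, hw⟩
        · rintro ⟨hzS, hzI⟩; exact ⟨⟨z, hzI⟩, hzS, rfl⟩
      have h2 : S'.ncard = (S ∩ I).ncard := by
        rw [← himg, Set.ncard_image_of_injective _ Subtype.val_injective]
      omega
    -- leaves part
    have hleaf : L.ncard ≤ (S ∩ L).ncard + 1 := by
      have hsub : (L \ S).ncard ≤ 1 := by
        rw [Set.ncard_le_one_iff (Set.toFinite _)]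
        intro x y hx hy
        by_contra hne'
        rcases gen_tree_leaves hT hgT hx.1 hy.1 hne' with h | h
        · exact hx.2 h
        · exact hy.2 h
      have := Set.ncard_inter_add_ncard_diff_eq_ncard L S (Set.toFinite L)
      rw [Set.inter_comm] at this
      omega
    -- counting
    have hcount : (S ∩ I).ncard + (S ∩ L).ncard ≤ S.ncard := by
      have hdisj : Disjoint (S ∩ I) (S ∩ L) := by
        rw [Set.disjoint_left]
        rintro z ⟨-, hzI⟩ ⟨-, hzL⟩
        exact hzI hzL
      rw [← Set.ncard_union_eq hdisj (Set.toFinite _) (Set.toFinite _)]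
      exact Set.ncard_le_ncard (Set.union_subset Set.inter_subset_left Set.inter_subset_left)
        (Set.toFinite S)
    omega
  · -- upper bound
    set J : Set V := I ∪ {u} with hJ
    have hmem : vcNum (T.induce J) ∈
        {n | ∃ C : Set ↥J, C.ncard = n ∧ _root_.IsVertexCover (T.induce J) C} :=
      Nat.sInf_mem ⟨Set.univ.ncard, Set.univ, rfl, fun x y _ => Or.inl (Set.mem_univ x)⟩
    obtain ⟨C, hCcard, hCcov⟩ := hmem
    set S₀ : Set V := (Subtype.val '' C) ∪ (L \ {u}) with hS₀
    -- S₀ is a vertex cover of T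
    have hcov₀ : ∀ x y : V, T.Adj x y → x ∈ S₀ ∨ y ∈ S₀ := by
      intro x y hxy
      by_cases hxL : IsLeaf T x <;> by_cases hyL : IsLeaf T y
      · exact absurd hxy (fun h => leaf_not_adj_leaf hT hwit hxL hyL h)
      · by_cases hxu : x = u
        · subst hxu
          have hxJ : x ∈ J := Or.inr rfl
          have hyJ : y ∈ J := Or.inl hyL
          rcases hCcov ⟨x, hxJ⟩ ⟨y, hyJ⟩ hxy with h | h
          · exact Or.inl (Or.inl ⟨⟨x, hxJ⟩, h, rfl⟩)
          · exact Or.inr (Or.inl ⟨⟨y, hyJ⟩, h, rfl⟩)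
        · exact Or.inl (Or.inr ⟨hxL, hxu⟩)
      · by_cases hyu : y = u
        · subst hyu
          have hxJ : x ∈ J := Or.inl hxL
          have hyJ : y ∈ J := Or.inr rfl
          rcases hCcov ⟨x, hxJ⟩ ⟨y, hyJ⟩ hxy with h | h
          · exact Or.inl (Or.inl ⟨⟨x, hxJ⟩, h, rfl⟩)
          · exact Or.inr (Or.inl ⟨⟨y, hyJ⟩, h, rfl⟩)
        · exact Or.inr (Or.inr ⟨hyL, hyu⟩)
      · have hxJ : x ∈ J := Or.inl hxL
        have hyJ : y ∈ J := Or.inl hyL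
        rcases hCcov ⟨x, hxJ⟩ ⟨y, hyJ⟩ hxy with h | h
        · exact Or.inl (Or.inl ⟨⟨x, hxJ⟩, h, rfl⟩)
        · exact Or.inr (Or.inl ⟨⟨y, hyJ⟩, h, rfl⟩)
    -- leaves other than u are in S₀; non-leaves outside S₀ are covered by res lemmas
    have hgen : ∀ G ∈ ({T, Tᶜ} : Set (SimpleGraph V)), IsStrongMetricGen G S₀ := by
      intro G hG a b hab
      by_cases haS : a ∈ S₀
      · exact resolve_left b haS
      by_cases hbS : b ∈ S₀
      · exact resolve_right a hbS
      have hnadj : ¬ T.Adj a b := fun h => (hcov₀ a b h).elim haS hbS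
      have main : ∀ p q : V, p ≠ q → q ∉ S₀ → ¬ IsLeaf T q → ¬ T.Adj p q →
          ∃ w ∈ S₀, StronglyResolves G w p q := by
        intro p q h1 h2 h3 h4
        rcases hG with rfl | rfl
        · obtain ⟨w, hwS, he⟩ := res_tree hT hnt hcov₀ h1 h2 h3
          exact ⟨w, hwS, Or.inl he⟩
        · obtain ⟨w, hwS, he⟩ := res_compl hT hwit hnt hcov₀ h1 h4 h2 h3
          exact ⟨w, hwS, Or.inr he⟩
      by_cases hbL : IsLeaf T b
      · -- b is a leaf outside S₀, so b = u; then a must be interior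
        have hbu : b = u := by
          by_contra h
          exact hbS (Or.inr ⟨hbL, h⟩)
        have haL : ¬ IsLeaf T a := by
          intro haL
          have hau : a = u := by
            by_contra h
            exact haS (Or.inr ⟨haL, h⟩)
          exact hab (hau.trans hbu.symm)
        obtain ⟨w, hwS, he⟩ := main b a hab.symm haS haL (fun h => hnadj h.symm)
        exact ⟨w, hwS, sr_symm he⟩
      · exact main a b hab hbS hbL hnadj
    have hle : SdS ({T, Tᶜ} : Set (SimpleGraph V)) ≤ S₀.ncard := Nat.sInf_le ⟨S₀, rfl, hgen⟩
    -- cardinality of S₀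
    have hdisj : Disjoint (Subtype.val '' C) (L \ {u}) := by
      rw [Set.disjoint_left]
      rintro z ⟨⟨c, hc⟩, -, rfl⟩ ⟨hzL, hzu⟩
      rcases hc with h | h
      · exact h hzL
      · exact hzu h
    have hcard : S₀.ncard = vcNum (T.induce J) + (L.ncard - 1) := by
      rw [hS₀, Set.ncard_union_eq hdisj (Set.toFinite _) (Set.toFinite _),
        Set.ncard_image_of_injective _ Subtype.val_injective, hCcard,
        Set.ncard_diff_singleton_of_mem hLu]
    omega
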